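/- (Uniform winner, incongruent loser.) Let v1 = v2 = 1 and let g be supported on two CTR pairs, g((r1,r2)) = p and g((r'1,r'2)) = 1−p, with p ∈ (0,1) and 0 ≤ r2 < r'2 ≤ r'1 < r1 ≤ 1. Then the no-disclosure revenue and the full-disclosure revenue of g are both equal to μ2 = p·r2 + (1−p)·r'2, and there exists a calibrated information structure x for g with Rev(x) > μ2. -/

import Mathlib

open scoped Classical

noncomputable section

/-- A CTR pair lies in the unit square. -/
def InUnitSq (r : ℝ × ℝ) : Prop := 0 ≤ r.1 ∧ r.1 ≤ 1 ∧ 0 ≤ r.2 ∧ r.2 ≤ 1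

/-- A finitely supported probability mass function on CTR pairs in [0,1]². -/
def IsPrior (g : ℝ × ℝ → ℝ) : Prop :=
  (Function.support g).Finite ∧ (∀ r, 0 ≤ g r) ∧
  (∀ r, g r ≠ 0 → InUnitSq r) ∧ (∑ᶠ r, g r) = 1

/-- An information structure for the prior `g`: finitely supported, nonnegative,
signals in [0,1]², with `r`-marginal equal to `g`. -/
def IsInfoStructure (g : ℝ × ℝ → ℝ) (x : (ℝ × ℝ) × (ℝ × ℝ) → ℝ) : Prop :=
  (Function.support x).Finite ∧ (∀ p, 0 ≤ x p) ∧
  (∀ p, x p ≠ 0 → InUnitSq p.2) ∧ (∀ r, (∑ᶠ s, x (r, s)) = g r)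

/-- Calibration: the posterior mean of `rᵢ` given any signal value `c` of bidder `i`
equals `c`. -/
def Calibrated (x : (ℝ × ℝ) × (ℝ × ℝ) → ℝ) : Prop :=
  ∀ c : ℝ, 0 ≤ c → c ≤ 1 →
    (∑ᶠ p : (ℝ × ℝ) × (ℝ × ℝ), if p.2.1 = c then x p * (p.1.1 - c) else 0) = 0 ∧
    (∑ᶠ p : (ℝ × ℝ) × (ℝ × ℝ), if p.2.2 = c then x p * (p.1.2 - c) else 0) = 0

/-- Independence: for each bidder `i` and each signal pair `s0` with positive
probability, the conditional mean of `rᵢ` given the full signal pair equals the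
conditional mean of `rᵢ` given `sᵢ` alone (stated in cross-multiplied form). -/
def Independent (x : (ℝ × ℝ) × (ℝ × ℝ) → ℝ) : Prop :=
  ∀ s0 : ℝ × ℝ, 0 < (∑ᶠ r, x (r, s0)) →
    ((∑ᶠ r, x (r, s0) * r.1) *
        (∑ᶠ p : (ℝ × ℝ) × (ℝ × ℝ), if p.2.1 = s0.1 then x p else 0)
      = (∑ᶠ p : (ℝ × ℝ) × (ℝ × ℝ), if p.2.1 = s0.1 then x p * p.1.1 else 0) *
        (∑ᶠ r, x (r, s0))) ∧
    ((∑ᶠ r, x (r, s0) * r.2) *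
        (∑ᶠ p : (ℝ × ℝ) × (ℝ × ℝ), if p.2.2 = s0.2 then x p else 0)
      = (∑ᶠ p : (ℝ × ℝ) × (ℝ × ℝ), if p.2.2 = s0.2 then x p * p.1.2 else 0) *
        (∑ᶠ r, x (r, s0)))

/-- Expected payment of the click-through auction given CTRs `r` and signals `s`,
with uniform tie-breaking (division by zero is zero in Lean, matching t/0 = 0). -/
def pay (v1 v2 : ℝ) (r s : ℝ × ℝ) : ℝ :=
  if v2 * s.2 < v1 * s.1 then r.1 * (v2 * s.2 / s.1)
  else if v1 * s.1 < v2 * s.2 then r.2 * (v1 * s.1 / s.2)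
  else (r.1 * (v2 * s.2 / s.1) + r.2 * (v1 * s.1 / s.2)) / 2

/-- Expected revenue of an information structure. -/
def Rev (v1 v2 : ℝ) (x : (ℝ × ℝ) × (ℝ × ℝ) → ℝ) : ℝ :=
  ∑ᶠ p : (ℝ × ℝ) × (ℝ × ℝ), x p * pay v1 v2 p.1 p.2

/-- Revenue of the no-disclosure information structure. -/
def noDisclosureRev (v1 v2 : ℝ) (g : ℝ × ℝ → ℝ) : ℝ :=
  min (v1 * ∑ᶠ r : ℝ × ℝ, g r * r.1) (v2 * ∑ᶠ r : ℝ × ℝ, g r * r.2)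

/-- Revenue of the full-disclosure information structure. -/
def fullDisclosureRev (v1 v2 : ℝ) (g : ℝ × ℝ → ℝ) : ℝ :=
  ∑ᶠ r : ℝ × ℝ, g r * min (v1 * r.1) (v2 * r.2)

private lemma finsum_two' (f : ℝ × ℝ → ℝ) (a b : ℝ × ℝ) (hab : a ≠ b)
    (hsupp : ∀ q, f q ≠ 0 → q = a ∨ q = b) :
    ∑ᶠ q, f q = f a + f b := by
  classical
  rw [finsum_eq_sum_of_support_subset f (s := {a, b})
    (by intro q hq; rw [Function.mem_support] at hq; simpa using hsupp q hq)]
  rw [Finset.sum_insert (by simp [hab]), Finset.sum_singleton]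

private lemma finsum_four' (f : (ℝ × ℝ) × (ℝ × ℝ) → ℝ) (a b c d : (ℝ × ℝ) × (ℝ × ℝ))
    (hab : a ≠ b) (hac : a ≠ c) (had : a ≠ d) (hbc : b ≠ c) (hbd : b ≠ d) (hcd : c ≠ d)
    (hsupp : ∀ q, f q ≠ 0 → q = a ∨ q = b ∨ q = c ∨ q = d) :
    ∑ᶠ q, f q = f a + (f b + (f c + f d)) := by
  classical
  rw [finsum_eq_sum_of_support_subset f (s := {a, b, c, d})
    (by intro q hq; rw [Function.mem_support] at hq; simpa using hsupp q hq)]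
  rw [Finset.sum_insert (by simp [hab, hac, had]), Finset.sum_insert (by simp [hbc, hbd]),
      Finset.sum_insert (by simp [hcd]), Finset.sum_singleton]

set_option maxHeartbeats 2000000 in
/-- uniform winner, incongruent loser: no-disclosure and
full-disclosure both yield μ2, and some calibrated information structure yields
strictly more. -/
theorem uniform_winner_incongruent_loser
    (p r1 r2 r1' r2' : ℝ) (hp0 : 0 < p) (hp1 : p < 1)
    (h0 : 0 ≤ r2) (h1 : r2 < r2') (h2 : r2' ≤ r1') (h3 : r1' < r1) (h4 : r1 ≤ 1)
    (g : ℝ × ℝ → ℝ)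
    (hgdef : ∀ r, g r = if r = (r1, r2) then p else if r = (r1', r2') then 1 - p else 0) :
    noDisclosureRev 1 1 g = p * r2 + (1 - p) * r2' ∧
    fullDisclosureRev 1 1 g = p * r2 + (1 - p) * r2' ∧
    ∃ x : (ℝ × ℝ) × (ℝ × ℝ) → ℝ,
      IsInfoStructure g x ∧ Calibrated x ∧ p * r2 + (1 - p) * r2' < Rev 1 1 x := by
  have hp1' : (0:ℝ) < 1 - p := by linarith
  have hr2'0 : (0:ℝ) < r2' := lt_of_le_of_lt h0 h1
  have hr1'0 : (0:ℝ) < r1' := lt_of_lt_of_le hr2'0 h2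
  have hr10 : (0:ℝ) < r1 := lt_trans hr1'0 h3
  have hr1'1 : r1' ≤ 1 := le_of_lt (lt_of_lt_of_le h3 h4)
  have hr2'1 : r2' ≤ 1 := le_trans h2 hr1'1
  have hr21 : r2 ≤ 1 := le_of_lt (lt_of_lt_of_le h1 hr2'1)
  have hAB : ((r1, r2) : ℝ × ℝ) ≠ (r1', r2') := by
    simp only [ne_eq, Prod.mk.injEq, not_and]
    intro h; linarith
  have hBA : ((r1', r2') : ℝ × ℝ) ≠ (r1, r2) := fun h => hAB h.symm
  have hgA : g (r1, r2) = p := by rw [hgdef]; simp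
  have hgB : g (r1', r2') = 1 - p := by rw [hgdef, if_neg hBA, if_pos rfl]
  have hgsupp : ∀ r, r ≠ (r1, r2) → r ≠ (r1', r2') → g r = 0 := by
    intro r ha hb; rw [hgdef, if_neg ha, if_neg hb]
  refine ⟨?_, ?_, ?_⟩
  · -- no disclosure
    have E1 : (∑ᶠ r : ℝ × ℝ, g r * r.1) = p * r1 + (1 - p) * r1' := by
      rw [finsum_two' (fun r => g r * r.1) (r1, r2) (r1', r2') hAB ?_]
      · simp only []; rw [hgA, hgB]
      · intro q hq
        by_contra hc
        push_neg at hc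
        exact hq (by simp [hgsupp q hc.1 hc.2])
    have E2 : (∑ᶠ r : ℝ × ℝ, g r * r.2) = p * r2 + (1 - p) * r2' := by
      rw [finsum_two' (fun r => g r * r.2) (r1, r2) (r1', r2') hAB ?_]
      · simp only []; rw [hgA, hgB]
      · intro q hq
        by_contra hc
        push_neg at hc
        exact hq (by simp [hgsupp q hc.1 hc.2])
    rw [noDisclosureRev, E1, E2, one_mul, one_mul, min_eq_right (by nlinarith)]
  · -- full disclosure
    rw [fullDisclosureRev,
      finsum_two' (fun r => g r * min (1 * r.1) (1 * r.2)) (r1, r2) (r1', r2') hAB ?_]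
    · simp only []
      rw [hgA, hgB, one_mul, one_mul, one_mul, one_mul,
        min_eq_right (show r2 ≤ r1 by linarith), min_eq_right h2]
    · intro q hq
      by_contra hc
      push_neg at hc
      exact hq (by simp [hgsupp q hc.1 hc.2])
  · -- the improving information structure
    obtain ⟨m1, hm1def⟩ : ∃ m1 : ℝ, m1 = p * r1 + (1 - p) * r1' := ⟨_, rfl⟩
    obtain ⟨sh, hshdef⟩ : ∃ sh : ℝ, sh = (p * r2 + 3 * (1 - p) * r2') / (3 - 2 * p) := ⟨_, rfl⟩
    obtain ⟨sl, hsldef⟩ : ∃ sl : ℝ, sl = (3 * p * r2 + (1 - p) * r2') / (1 + 2 * p) := ⟨_, rfl⟩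
    have hd1 : (0:ℝ) < 3 - 2 * p := by linarith
    have hd2 : (0:ℝ) < 1 + 2 * p := by linarith
    have hm1pos : 0 < m1 := by rw [hm1def]; nlinarith
    have hm1lt : m1 < r1 := by rw [hm1def]; nlinarith
    have hm1gt : r1' < m1 := by rw [hm1def]; nlinarith
    have hm1le1 : m1 ≤ 1 := by rw [hm1def]; nlinarith
    have hsh0 : 0 ≤ sh := by rw [hshdef]; apply div_nonneg _ hd1.le; nlinarith
    have hsl0 : 0 ≤ sl := by rw [hsldef]; apply div_nonneg _ hd2.le; nlinarith
    have hshlt : sh < r2' := by rw [hshdef, div_lt_iff₀ hd1]; nlinarith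
    have hsllt : sl < r2' := by rw [hsldef, div_lt_iff₀ hd2]; nlinarith
    have hsh1 : sh ≤ 1 := le_trans hshlt.le hr2'1
    have hsl1 : sl ≤ 1 := le_trans hsllt.le hr2'1
    have hslsh : sl < sh := by
      rw [hsldef, hshdef, div_lt_div_iff₀ hd2 hd1]
      nlinarith [mul_pos (mul_pos hp0 hp1') (sub_pos.2 h1)]
    have hshm1 : sh < m1 := lt_of_lt_of_le hshlt (le_trans h2 hm1gt.le)
    have hslm1 : sl < m1 := lt_of_lt_of_le hsllt (le_trans h2 hm1gt.le)
    have hslr1 : sl < r1 := lt_of_lt_of_le hsllt (le_trans h2 h3.le)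
    have hshr1' : sh < r1' := lt_of_lt_of_le hshlt h2
    obtain ⟨P1, hP1def⟩ : ∃ q : (ℝ × ℝ) × (ℝ × ℝ), q = ((r1, r2), (m1, sh)) := ⟨_, rfl⟩
    obtain ⟨P2, hP2def⟩ : ∃ q : (ℝ × ℝ) × (ℝ × ℝ), q = ((r1', r2'), (m1, sl)) := ⟨_, rfl⟩
    obtain ⟨P3, hP3def⟩ : ∃ q : (ℝ × ℝ) × (ℝ × ℝ), q = ((r1, r2), (r1, sl)) := ⟨_, rfl⟩
    obtain ⟨P4, hP4def⟩ : ∃ q : (ℝ × ℝ) × (ℝ × ℝ), q = ((r1', r2'), (r1', sh)) := ⟨_, rfl⟩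
    have hP12 : P1 ≠ P2 := by
      rw [hP1def, hP2def]; intro hEq
      injection hEq with e1 e2; injection e1 with ea eb; linarith
    have hP13 : P1 ≠ P3 := by
      rw [hP1def, hP3def]; intro hEq
      injection hEq with e1 e2; injection e2 with ea eb; linarith
    have hP14 : P1 ≠ P4 := by
      rw [hP1def, hP4def]; intro hEq
      injection hEq with e1 e2; injection e1 with ea eb; linarith
    have hP23 : P2 ≠ P3 := by
      rw [hP2def, hP3def]; intro hEq
      injection hEq with e1 e2; injection e1 with ea eb; linarith
    have hP24 : P2 ≠ P4 := by
      rw [hP2def, hP4def]; intro hEq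
      injection hEq with e1 e2; injection e2 with ea eb; linarith
    have hP34 : P3 ≠ P4 := by
      rw [hP3def, hP4def]; intro hEq
      injection hEq with e1 e2; injection e1 with ea eb; linarith
    obtain ⟨x, hxdef⟩ : ∃ x : (ℝ × ℝ) × (ℝ × ℝ) → ℝ, x = fun q =>
        if q = P1 then p / 4 else if q = P2 then (1 - p) / 4
        else if q = P3 then 3 * p / 4 else if q = P4 then 3 * (1 - p) / 4 else 0 := ⟨_, rfl⟩
    have hxP1 : x P1 = p / 4 := by rw [hxdef]; simp
    have hxP2 : x P2 = (1 - p) / 4 := by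
      rw [hxdef]; simp [Ne.symm hP12]
    have hxP3 : x P3 = 3 * p / 4 := by
      rw [hxdef]; simp [Ne.symm hP13, Ne.symm hP23]
    have hxP4 : x P4 = 3 * (1 - p) / 4 := by
      rw [hxdef]; simp [Ne.symm hP14, Ne.symm hP24, Ne.symm hP34]
    have hxsupp : ∀ q, x q ≠ 0 → q = P1 ∨ q = P2 ∨ q = P3 ∨ q = P4 := by
      intro q hq
      simp only [hxdef] at hq
      by_contra hc
      push_neg at hc
      rw [if_neg hc.1, if_neg hc.2.1, if_neg hc.2.2.1, if_neg hc.2.2.2] at hq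
      exact hq rfl
    refine ⟨x, ⟨?_, ?_, ?_, ?_⟩, ?_, ?_⟩
    · -- finite support
      apply Set.Finite.subset (Set.toFinite ({P1, P2, P3, P4} : Set ((ℝ × ℝ) × (ℝ × ℝ))))
      intro q hq
      rcases hxsupp q hq with h | h | h | h <;> simp [h]
    · -- nonneg
      intro q
      simp only [hxdef]
      split_ifs <;> linarith
    · -- signals in unit square
      intro q hq
      rcases hxsupp q hq with h | h | h | h <;> rw [h]
      · rw [hP1def]; exact ⟨hm1pos.le, hm1le1, hsh0, hsh1⟩
      · rw [hP2def]; exact ⟨hm1pos.le, hm1le1, hsl0, hsl1⟩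
      · rw [hP3def]; exact ⟨hr10.le, h4, hsl0, hsl1⟩
      · rw [hP4def]; exact ⟨hr1'0.le, hr1'1, hsh0, hsh1⟩
    · -- marginal
      intro r
      by_cases hrA : r = (r1, r2)
      · subst hrA
        rw [finsum_two' (fun s => x ((r1, r2), s)) (m1, sh) (r1, sl)
            (by intro hEq; injection hEq with ea eb; linarith) ?_]
        · rw [show (((r1, r2), (m1, sh)) : (ℝ × ℝ) × (ℝ × ℝ)) = P1 from hP1def.symm,
            show (((r1, r2), (r1, sl)) : (ℝ × ℝ) × (ℝ × ℝ)) = P3 from hP3def.symm,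
            hxP1, hxP3, hgA]
          ring
        · intro s hs
          rcases hxsupp _ hs with h | h | h | h
          · rw [hP1def] at h; left; exact congrArg Prod.snd h
          · rw [hP2def] at h; exact absurd (congrArg Prod.fst h) hAB
          · rw [hP3def] at h; right; exact congrArg Prod.snd h
          · rw [hP4def] at h; exact absurd (congrArg Prod.fst h) hAB
      · by_cases hrB : r = (r1', r2')
        · subst hrB
          rw [finsum_two' (fun s => x ((r1', r2'), s)) (m1, sl) (r1', sh)
              (by intro hEq; injection hEq with ea eb; linarith) ?_]
          · rw [show (((r1', r2'), (m1, sl)) : (ℝ × ℝ) × (ℝ × ℝ)) = P2 from hP2def.symm,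
              show (((r1', r2'), (r1', sh)) : (ℝ × ℝ) × (ℝ × ℝ)) = P4 from hP4def.symm,
              hxP2, hxP4, hgB]
            ring
          · intro s hs
            rcases hxsupp _ hs with h | h | h | h
            · rw [hP1def] at h; exact absurd (congrArg Prod.fst h) hBA
            · rw [hP2def] at h; left; exact congrArg Prod.snd h
            · rw [hP3def] at h; exact absurd (congrArg Prod.fst h) hBA
            · rw [hP4def] at h; right; exact congrArg Prod.snd h
        · rw [hgsupp r hrA hrB]
          apply finsum_eq_zero_of_forall_eq_zero
          intro s
          by_contra hs
          rcases hxsupp _ hs with h | h | h | h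
          · exact hrA (by rw [hP1def] at h; exact congrArg Prod.fst h)
          · exact hrB (by rw [hP2def] at h; exact congrArg Prod.fst h)
          · exact hrA (by rw [hP3def] at h; exact congrArg Prod.fst h)
          · exact hrB (by rw [hP4def] at h; exact congrArg Prod.fst h)
    · -- calibrated
      intro c hc0 hc1
      constructor
      · rw [finsum_four' _ P1 P2 P3 P4 hP12 hP13 hP14 hP23 hP24 hP34 ?_]
        · rw [hP1def, hP2def, hP3def, hP4def]
          simp only []
          rw [show (((r1, r2), (m1, sh)) : (ℝ × ℝ) × (ℝ × ℝ)) = P1 from hP1def.symm,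
            show (((r1', r2'), (m1, sl)) : (ℝ × ℝ) × (ℝ × ℝ)) = P2 from hP2def.symm,
            show (((r1, r2), (r1, sl)) : (ℝ × ℝ) × (ℝ × ℝ)) = P3 from hP3def.symm,
            show (((r1', r2'), (r1', sh)) : (ℝ × ℝ) × (ℝ × ℝ)) = P4 from hP4def.symm,
            hxP1, hxP2, hxP3, hxP4]
          have t3 : (if r1 = c then 3 * p / 4 * (r1 - c) else 0) = 0 := by
            split_ifs with h
            · rw [h]; ring
            · rfl
          have t4 : (if r1' = c then 3 * (1 - p) / 4 * (r1' - c) else 0) = 0 := by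
            split_ifs with h
            · rw [h]; ring
            · rfl
          rw [t3, t4]
          split_ifs with e1
          · have hc' : p * r1 + (1 - p) * r1' = c := hm1def.symm.trans e1
            linear_combination hc' / 4
          · ring
        · intro q hq
          apply hxsupp
          intro hx0
          apply hq
          split_ifs
          · rw [hx0, zero_mul]
          · rfl
      · rw [finsum_four' _ P1 P2 P3 P4 hP12 hP13 hP14 hP23 hP24 hP34 ?_]
        · rw [hP1def, hP2def, hP3def, hP4def]
          simp only []
          rw [show (((r1, r2), (m1, sh)) : (ℝ × ℝ) × (ℝ × ℝ)) = P1 from hP1def.symm,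
            show (((r1', r2'), (m1, sl)) : (ℝ × ℝ) × (ℝ × ℝ)) = P2 from hP2def.symm,
            show (((r1, r2), (r1, sl)) : (ℝ × ℝ) × (ℝ × ℝ)) = P3 from hP3def.symm,
            show (((r1', r2'), (r1', sh)) : (ℝ × ℝ) × (ℝ × ℝ)) = P4 from hP4def.symm,
            hxP1, hxP2, hxP3, hxP4]
          split_ifs with e1 e2 e2
          · exfalso; linarith
          · have hc' : p * r2 + 3 * (1 - p) * r2' = c * (3 - 2 * p) := by
              have := hshdef.symm.trans e1
              rwa [div_eq_iff (ne_of_gt hd1)] at this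
            linear_combination hc' / 4
          · have hc' : 3 * p * r2 + (1 - p) * r2' = c * (1 + 2 * p) := by
              have := hsldef.symm.trans e2
              rwa [div_eq_iff (ne_of_gt hd2)] at this
            linear_combination hc' / 4
          · ring
        · intro q hq
          apply hxsupp
          intro hx0
          apply hq
          split_ifs
          · rw [hx0, zero_mul]
          · rfl
    · -- revenue
      rw [Rev, finsum_four' _ P1 P2 P3 P4 hP12 hP13 hP14 hP23 hP24 hP34 ?_]
      · have hpay1 : pay 1 1 (r1, r2) (m1, sh) = r1 * (1 * sh / m1) := by
          rw [pay, if_pos (by simpa using hshm1)]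
        have hpay2 : pay 1 1 (r1', r2') (m1, sl) = r1' * (1 * sl / m1) := by
          rw [pay, if_pos (by simpa using hslm1)]
        have hpay3 : pay 1 1 (r1, r2) (r1, sl) = r1 * (1 * sl / r1) := by
          rw [pay, if_pos (by simpa using hslr1)]
        have hpay4 : pay 1 1 (r1', r2') (r1', sh) = r1' * (1 * sh / r1') := by
          rw [pay, if_pos (by simpa using hshr1')]
        rw [show P1.1 = (r1, r2) from by rw [hP1def], show P1.2 = (m1, sh) from by rw [hP1def],
          show P2.1 = (r1', r2') from by rw [hP2def], show P2.2 = (m1, sl) from by rw [hP2def],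
          show P3.1 = (r1, r2) from by rw [hP3def], show P3.2 = (r1, sl) from by rw [hP3def],
          show P4.1 = (r1', r2') from by rw [hP4def], show P4.2 = (r1', sh) from by rw [hP4def],
          hxP1, hxP2, hxP3, hxP4, hpay1, hpay2, hpay3, hpay4]
        have hA' : (0:ℝ) < r1 - r1' := by linarith
        have hB' : (0:ℝ) < r2' - r2 := by linarith
        have hm1pos' : (0:ℝ) < p * r1 + (1 - p) * r1' := by rw [← hm1def]; exact hm1pos
        have hnum : (0:ℝ) < 2 * p ^ 2 * (1 - p) ^ 2 * (r1 - r1') * (r2' - r2) :=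
          mul_pos (mul_pos (mul_pos (mul_pos two_pos (pow_pos hp0 2)) (pow_pos hp1' 2)) hA') hB'
        have hden : (0:ℝ) < (p * r1 + (1 - p) * r1') * (3 - 2 * p) * (1 + 2 * p) :=
          mul_pos (mul_pos hm1pos' hd1) hd2
        have key : p / 4 * (r1 * (1 * sh / m1)) + ((1 - p) / 4 * (r1' * (1 * sl / m1)) +
            (3 * p / 4 * (r1 * (1 * sl / r1)) + 3 * (1 - p) / 4 * (r1' * (1 * sh / r1')))) =
            (p * r2 + (1 - p) * r2') + 2 * p ^ 2 * (1 - p) ^ 2 * (r1 - r1') * (r2' - r2) /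
              ((p * r1 + (1 - p) * r1') * (3 - 2 * p) * (1 + 2 * p)) := by
          rw [hshdef, hsldef, hm1def]
          field_simp [hd1.ne', (show (0:ℝ) < 3 - p * 2 by linarith).ne', hd2.ne', hm1pos'.ne', hr10.ne', hr1'0.ne']
          ring
        rw [key]
        linarith [div_pos hnum hden]
      · intro q hq
        apply hxsupp
        intro hx0
        apply hq
        rw [hx0, zero_mul]
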